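/- Let a < b, let g : [a,b] → ℝ be a convex Lebesgue integrable function, and let f : [a,b] → ℝ be a Lebesgue integrable g-convex dominated function. Then |(f(a) + f(b))/2 − (1/(b−a)) ∫_a^b f(x) dx| ≤ (g(a) + g(b))/2 − (1/(b−a)) ∫_a^b g(x) dx. -/

import Mathlib

open MeasureTheory Set

lemma aux_affine_integral (a b c d : ℝ) :
    ∫ x in a..b, (c * x + d) = c * (b^2 - a^2) / 2 + d * (b - a) := by
  rw [intervalIntegral.integral_add ((by fun_prop : Continuous fun x : ℝ => c * x).intervalIntegrable _ _)
    (intervalIntegrable_const), intervalIntegral.integral_const_mul, integral_id,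
    intervalIntegral.integral_const]
  simp [smul_eq_mul]
  ring

theorem stmt12 (a b : ℝ) (hab : a < b) (f g : ℝ → ℝ)
    (hgconv : ConvexOn ℝ (Set.Icc a b) g)
    (hgint : IntegrableOn g (Set.Icc a b))
    (hfint : IntegrableOn f (Set.Icc a b))
    (hfdom : ∀ x ∈ Set.Icc a b, ∀ y ∈ Set.Icc a b, ∀ l ∈ Set.Icc (0:ℝ) 1,
      |l * f x + (1 - l) * f y - f (l * x + (1 - l) * y)| ≤
        l * g x + (1 - l) * g y - g (l * x + (1 - l) * y)) :
    |(f a + f b) / 2 - (1 / (b - a)) * ∫ x in a..b, f x| ≤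
      (g a + g b) / 2 - (1 / (b - a)) * ∫ x in a..b, g x := by
  have hba : (0:ℝ) < b - a := by linarith
  set φ : ℝ → ℝ := fun x => ((b - x) / (b - a)) * f a + ((x - a) / (b - a)) * f b - f x with hφ
  set ψ : ℝ → ℝ := fun x => ((b - x) / (b - a)) * g a + ((x - a) / (b - a)) * g b - g x with hψ
  -- pointwise bound
  have hpt : ∀ x ∈ Icc a b, |φ x| ≤ ψ x := by
    intro x hx
    obtain ⟨hxa, hxb⟩ := hx
    have hl : (b - x) / (b - a) ∈ Icc (0:ℝ) 1 := by
      constructor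
      · apply div_nonneg <;> linarith
      · rw [div_le_one hba]; linarith
    have key := hfdom a (left_mem_Icc.2 hab.le) b (right_mem_Icc.2 hab.le) _ hl
    have h1 : 1 - (b - x) / (b - a) = (x - a) / (b - a) := by field_simp; ring
    have h2 : (b - x) / (b - a) * a + (x - a) / (b - a) * b = x := by
      field_simp; ring
    rw [h1, h2] at key
    simpa [hφ, hψ] using key
  -- integrability
  have hcont : ∀ c d : ℝ, Continuous fun x : ℝ => ((b - x) / (b - a)) * c + ((x - a) / (b - a)) * d := by
    intro c d; fun_prop
  have hφint : IntegrableOn φ (Icc a b) :=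
    (((hcont (f a) (f b)).integrableOn_Icc)).sub hfint
  have hψint : IntegrableOn ψ (Icc a b) :=
    (((hcont (g a) (g b)).integrableOn_Icc)).sub hgint
  -- integral comparison
  have hA : |∫ x in Icc a b, φ x| ≤ ∫ x in Icc a b, ψ x := by
    calc |∫ x in Icc a b, φ x| ≤ ∫ x in Icc a b, |φ x| := by
          simpa [Real.norm_eq_abs] using
            norm_integral_le_integral_norm (μ := volume.restrict (Icc a b)) φ
      _ ≤ ∫ x in Icc a b, ψ x :=
          setIntegral_mono_on hφint.abs hψint measurableSet_Icc hpt
  -- compute the integrals of the affine parts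
  have haff : ∀ c d : ℝ,
      ∫ x in a..b, (((b - x) / (b - a)) * c + ((x - a) / (b - a)) * d)
        = (c + d) * (b - a) / 2 := by
    intro c d
    have heq : ∀ x : ℝ, ((b - x) / (b - a)) * c + ((x - a) / (b - a)) * d
        = ((d - c) / (b - a)) * x + ((b * c - a * d) / (b - a)) := by
      intro x; field_simp; ring
    rw [intervalIntegral.integral_congr (fun x _ => heq x), aux_affine_integral]
    field_simp
    ring
  have hIccφ : ∫ x in Icc a b, φ x
      = (f a + f b) * (b - a) / 2 - ∫ x in a..b, f x := by
    rw [MeasureTheory.integral_Icc_eq_integral_Ioc, ← intervalIntegral.integral_of_le hab.le]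
    rw [intervalIntegral.integral_sub
      ((hcont (f a) (f b)).intervalIntegrable _ _)
      (by rw [intervalIntegrable_iff_integrableOn_Icc_of_le hab.le]; exact hfint)]
    rw [haff]
  have hIccψ : ∫ x in Icc a b, ψ x
      = (g a + g b) * (b - a) / 2 - ∫ x in a..b, g x := by
    rw [MeasureTheory.integral_Icc_eq_integral_Ioc, ← intervalIntegral.integral_of_le hab.le]
    rw [intervalIntegral.integral_sub
      ((hcont (g a) (g b)).intervalIntegrable _ _)
      (by rw [intervalIntegrable_iff_integrableOn_Icc_of_le hab.le]; exact hgint)]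
    rw [haff]
  have e1 : (f a + f b) / 2 - (1 / (b - a)) * ∫ x in a..b, f x
      = (1 / (b - a)) * ∫ x in Icc a b, φ x := by
    rw [hIccφ]; field_simp
  have e2 : (g a + g b) / 2 - (1 / (b - a)) * ∫ x in a..b, g x
      = (1 / (b - a)) * ∫ x in Icc a b, ψ x := by
    rw [hIccψ]; field_simp
  rw [e1, e2, abs_mul, abs_of_pos (by positivity : (0:ℝ) < 1 / (b - a))]
  exact mul_le_mul_of_nonneg_left hA (by positivity)
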